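/- Let n and b be real numbers with b ≥ 1 and n − b + 1 > 0, let r ≥ 1 be a natural number, and assume n − r·(b−1) ≥ 0. Then ∏_{i=1}^{r} ((n − i·(b−1)) / (n − b + 1))^b ≤ ((n − ((r+1)/2)·(b−1)) / (n − b + 1))^(r·b). -/

import Mathlib

lemma sum_Icc_id_cast_real (r : ℕ) :
    (∑ i ∈ Finset.Icc 1 r, (i : ℝ)) = (r : ℝ) * ((r : ℝ) + 1) / 2 := by
  induction r with
  | zero => simp
  | succ k ih =>
    rw [Finset.sum_Icc_succ_top (by omega), ih]
    push_cast; ring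

/-- Bounding the product of the `r` avoidance probabilities by a single power:
`∏_{i=1}^{r} ((n - i(b-1))/(n-b+1))^b ≤ ((n - ((r+1)/2)(b-1))/(n-b+1))^(r·b)`. -/
theorem prod_avoidance_le_pow (n b : ℝ) (hb : 1 ≤ b) (hnb : 0 < n - b + 1)
    (r : ℕ) (hr : 1 ≤ r) (h : 0 ≤ n - (r : ℝ) * (b - 1)) :
    ∏ i ∈ Finset.Icc 1 r, ((n - (i : ℝ) * (b - 1)) / (n - b + 1)) ^ b
      ≤ ((n - (((r : ℝ) + 1) / 2) * (b - 1)) / (n - b + 1)) ^ ((r : ℝ) * b) := by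
  set a := b - 1 with ha
  have ha0 : 0 ≤ a := by linarith
  set D := n - b + 1 with hD
  set y : ℕ → ℝ := fun i => n - (i : ℝ) * a with hy
  set M : ℝ := n - (((r : ℝ) + 1) / 2) * a with hM
  have hrpos : (0 : ℝ) < r := by exact_mod_cast hr
  have hynn : ∀ i ∈ Finset.Icc 1 r, 0 ≤ y i := by
    intro i hi
    simp only [Finset.mem_Icc] at hi
    have : (i : ℝ) ≤ r := by exact_mod_cast hi.2
    have := mul_le_mul_of_nonneg_right this ha0
    simp only [hy]
    nlinarith
  -- sum of y over Icc 1 r equals r * M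
  have hsum : ∑ i ∈ Finset.Icc 1 r, y i = (r : ℝ) * M := by
    have h1 : ∑ i ∈ Finset.Icc 1 r, y i
        = (r : ℝ) * n - (∑ i ∈ Finset.Icc 1 r, (i : ℝ)) * a := by
      rw [Finset.sum_sub_distrib, Finset.sum_const, Nat.card_Icc]
      simp [Finset.sum_mul, nsmul_eq_mul]
    have h2 := sum_Icc_id_cast_real r
    rw [h1, h2, hM]; ring
  have hMnn : 0 ≤ M := by
    have := Finset.sum_nonneg hynn
    rw [hsum] at this
    exact nonneg_of_mul_nonneg_right this hrpos
  -- AM-GM: ∏ y ≤ M ^ r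
  have hkey : ∏ i ∈ Finset.Icc 1 r, y i ≤ M ^ r := by
    have hgm := Real.geom_mean_le_arith_mean_weighted (Finset.Icc 1 r)
      (fun _ => (r : ℝ)⁻¹) y (fun i _ => by positivity) ?_ hynn
    · have hsum' : ∑ i ∈ Finset.Icc 1 r, (r : ℝ)⁻¹ * y i = M := by
        rw [← Finset.mul_sum, hsum, inv_mul_cancel_left₀ (ne_of_gt hrpos)]
      rw [hsum'] at hgm
      have hprodnn : 0 ≤ ∏ i ∈ Finset.Icc 1 r, y i := Finset.prod_nonneg hynn
      have := Real.rpow_le_rpow (x := ∏ i ∈ Finset.Icc 1 r, y i ^ (r : ℝ)⁻¹)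
        (Finset.prod_nonneg fun i hi => Real.rpow_nonneg (hynn i hi) _)
        hgm (le_of_lt hrpos)
      rw [Real.finset_prod_rpow _ _ hynn, ← Real.rpow_mul hprodnn,
        inv_mul_cancel₀ (ne_of_gt hrpos), Real.rpow_one, Real.rpow_natCast] at this
      exact this
    · rw [Finset.sum_const, Nat.card_Icc]
      simp only [nsmul_eq_mul]
      field_simp
      simp
  -- combine
  have hdivnn : ∀ i ∈ Finset.Icc 1 r, 0 ≤ y i / D := fun i hi =>
    div_nonneg (hynn i hi) hnb.le
  have hb0 : 0 ≤ b := by linarith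
  calc ∏ i ∈ Finset.Icc 1 r, (y i / D) ^ b
      = (∏ i ∈ Finset.Icc 1 r, y i / D) ^ b := Real.finset_prod_rpow _ _ hdivnn b
    _ ≤ ((M / D) ^ r) ^ b := by
        apply Real.rpow_le_rpow (Finset.prod_nonneg hdivnn) _ hb0
        rw [Finset.prod_div_distrib, Finset.prod_const, Nat.card_Icc, Nat.add_sub_cancel,
          div_pow]
        gcongr
    _ = (M / D) ^ ((r : ℝ) * b) := by
        rw [Real.rpow_natCast_mul (div_nonneg hMnn hnb.le)]
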